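/- Let H be a cactus graph and let P = x_1 x_2 … x_{ℓ+1} be a path of length ℓ in H that is the unique shortest path from x_1 to x_{ℓ+1} in H. Then the three sets T_1(P), T_2(P) and T_3(P) are pairwise disjoint and their union is the set of all walks of length ℓ+2 from x_1 to x_{ℓ+1} in H. -/

import Mathlib

open SimpleGraph

/-- The number of walks of length `n` from `u` to `v` in `G`. -/
noncomputable def walkCount {V : Type*} (G : SimpleGraph V) (n : ℕ) (u v : V) : ℕ :=
  Nat.card {w : G.Walk u v // w.length = n}

/-- The degree of a vertex, as the cardinality of its neighbour set. -/
noncomputable def vdeg {V : Type*} (G : SimpleGraph V) (v : V) : ℕ :=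
  (G.neighborSet v).ncard

/-- An involution of a graph: an automorphism of order two. -/
def IsInvolution {V : Type*} (G : SimpleGraph V) (σ : G ≃g G) : Prop :=
  σ.toEquiv ≠ Equiv.refl V ∧ ∀ v, σ (σ v) = v

/-- A graph is involution-free if it has no involution. -/
def InvolutionFree {V : Type*} (G : SimpleGraph V) : Prop :=
  ¬ ∃ σ : G ≃g G, IsInvolution G σ

/-- A rooted graph `(G, x)` is involution-free if `G` has no involution fixing `x`. -/
def RootedInvolutionFree {V : Type*} (G : SimpleGraph V) (x : V) : Prop :=
  ¬ ∃ σ : G ≃g G, IsInvolution G σ ∧ σ x = x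

/-- Every edge of `G` belongs to at most one cycle: any two cycles sharing an
edge have the same edge set. -/
def EdgesOnAtMostOneCycle {V : Type*} (G : SimpleGraph V) : Prop :=
  ∀ (a b : V) (c : G.Walk a a) (d : G.Walk b b), c.IsCycle → d.IsCycle →
    ∀ e, e ∈ c.edges → e ∈ d.edges → ∀ f, f ∈ c.edges ↔ f ∈ d.edges

/-- A cactus graph: a connected simple graph in which every edge belongs to at
most one cycle. -/
def IsCactus {V : Type*} (G : SimpleGraph V) : Prop :=
  G.Connected ∧ EdgesOnAtMostOneCycle G

/-- The distance from a vertex to a set of vertices. -/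
noncomputable def setDist {V : Type*} (G : SimpleGraph V) (v : V) (S : Set V) : ℕ :=
  sInf (G.dist v '' S)

/-- A hardness gadget `(β, s, t, O, i, K, k, w)` in a graph `G`. -/
structure HardnessGadget {V : Type*} (G : SimpleGraph V) where
  β : ℕ
  s : V
  t : V
  i : V
  O : Set V
  K : Set V
  k : V → ℕ
  w : V → V
  β_pos : 0 < β
  i_not_in_O : i ∉ O
  i_not_in_K : i ∉ K
  O_disj_K : Disjoint O K
  nbhd_partition : O ∪ {i} ∪ K = G.neighborSet s
  O_odd : Odd O.ncard
  s_unique : ∀ o ∈ O, ∀ y ∈ O ∪ {i}, ∀ z : V,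
    (G.Adj z o ∧ G.Adj z y ∧ Odd (walkCount G β z t)) ↔ z = s
  i_t_even : Even (walkCount G (1 + β) i t)
  k_pos : ∀ u ∈ K, 0 < k u
  w_walks : ∀ u ∈ K, Even (walkCount G (k u) (w u) u) ∧
    ∀ y ∈ O ∪ {i}, Odd (walkCount G (k u) (w u) y)

/-- The distance requirements of a hardness gadget with respect to a vertex `v`. -/
def HardnessGadget.SatisfiesDistReq {V : Type*} {G : SimpleGraph V}
    (Γ : HardnessGadget G) (v : V) : Prop :=
  ((setDist G v (Γ.O ∪ {Γ.i}) : ℤ) + (G.dist v Γ.t : ℤ) > (Γ.β : ℤ) - 1) ∧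
  ∀ u ∈ Γ.K, ((G.dist v (Γ.w u) : ℤ) + (setDist G v (Γ.O ∪ {Γ.i, u}) : ℤ)
      > (Γ.k u : ℤ) - 2)

/-- `P` is the unique shortest path between its endpoints. -/
def IsUniqueShortestPath {V : Type*} (G : SimpleGraph V) {u v : V}
    (P : G.Walk u v) : Prop :=
  P.IsPath ∧ ∀ Q : G.Walk u v, Q.IsPath → Q.length ≤ P.length → Q = P

/-- The graph `G` contains a cycle. -/
def HasCycle {V : Type*} (G : SimpleGraph V) : Prop :=
  ∃ (a : V) (c : G.Walk a a), c.IsCycle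

/-- The edge `e` lies on a 4-cycle of `G`. -/
def EdgeOnFourCycle {V : Type*} (G : SimpleGraph V) (e : Sym2 V) : Prop :=
  ∃ (a : V) (c : G.Walk a a), c.IsCycle ∧ c.length = 4 ∧ e ∈ c.edges

/-- An unbristled mosaic: the one-vertex rooted graph, or a rooted cactus graph
that is a union of 4-cycles. -/
def IsUnbristledMosaic {V : Type*} (G : SimpleGraph V) (x : V) : Prop :=
  (∀ v : V, v = x) ∨ (IsCactus G ∧ ∀ e ∈ G.edgeSet, EdgeOnFourCycle G e)

/-- A mosaic: a rooted graph obtained from an unbristled mosaic on a vertex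
subset `V'` containing the root by attaching a perfect matching ("bristles")
between the remaining vertices and a subset of `V'`. -/
def IsMosaic {V : Type*} (G : SimpleGraph V) (x : V) : Prop :=
  ∃ (V' : Set V) (hx : x ∈ V'),
    IsUnbristledMosaic (G.induce V') ⟨x, hx⟩ ∧
    (∀ v, v ∉ V' → ∀ u, G.Adj v u → u ∈ V') ∧
    (∀ v, v ∉ V' → ∃! u, G.Adj v u) ∧
    (∀ u v₁ v₂, v₁ ∉ V' → v₂ ∉ V' → G.Adj u v₁ → G.Adj u v₂ → v₁ = v₂)

/-- A proper mosaic: a mosaic containing at least one cycle. -/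
def IsProperMosaic {V : Type*} (G : SimpleGraph V) (x : V) : Prop :=
  IsMosaic G x ∧ HasCycle G

/-- A shortcut in the rooted graph `(G, x)`: a pair of distinct odd-degree
vertices of degree at least 3 with a unique shortest path between them that
avoids `x`. -/
def HasShortcut {V : Type*} (G : SimpleGraph V) (x : V) : Prop :=
  ∃ v₁ v₂ : V, v₁ ≠ v₂ ∧ Odd (vdeg G v₁) ∧ Odd (vdeg G v₂) ∧
    3 ≤ vdeg G v₁ ∧ 3 ≤ vdeg G v₂ ∧
    ∃ P : G.Walk v₁ v₂, IsUniqueShortestPath G P ∧ x ∉ P.support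

/-- A 2,3-path `(P, v₂, v₃)` in a rooted graph: `v₂` and `v₃` lie on a common
cycle, have degrees 2 and 3 respectively, and the extensions of `P` by `v₂`
and by `v₃` are unique shortest paths from the root. -/
def Is23Path {V : Type*} (G : SimpleGraph V) {x z : V} (P : G.Walk x z)
    (v₂ v₃ : V) : Prop :=
  (∃ (a : V) (c : G.Walk a a), c.IsCycle ∧ v₂ ∈ c.support ∧ v₃ ∈ c.support) ∧
  vdeg G v₂ = 2 ∧ vdeg G v₃ = 3 ∧
  (∃ h₂ : G.Adj z v₂, IsUniqueShortestPath G (P.concat h₂)) ∧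
  (∃ h₃ : G.Adj z v₃, IsUniqueShortestPath G (P.concat h₃))

/-- A partial hardness gadget `(s, i, O, P)` in the rooted graph `(G, x)`. -/
def IsPartialHardnessGadget {V : Type*} (G : SimpleGraph V) (x s i : V)
    (O : Set V) (P : G.Walk x i) : Prop :=
  i ∉ O ∧ insert i O = G.neighborSet s ∧ Odd O.ncard ∧
  IsUniqueShortestPath G P ∧
  ∃ his : G.Adj i s, IsUniqueShortestPath G (P.concat his) ∧
    ∀ o ∈ O, ∃ hso : G.Adj s o, IsUniqueShortestPath G ((P.concat his).concat hso)

/-- `C` is (the vertex set of) a connected component of `G - {x}`, i.e. of the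
split of `G` at `x`; the corresponding member of the split is the subgraph of
`G` induced by `C ∪ {x}`. -/
def IsSplitComponent {V : Type*} (G : SimpleGraph V) (x : V) (C : Set V) : Prop :=
  x ∉ C ∧ C.Nonempty ∧ (G.induce C).Connected ∧
  ∀ u ∈ C, ∀ v : V, G.Adj u v → v ≠ x → v ∈ C

/-- `x` is a cut vertex: `G - {x}` has at least two connected components. -/
def IsCutVertex {V : Type*} (G : SimpleGraph V) (x : V) : Prop :=
  ∃ C₁ C₂ : Set V, IsSplitComponent G x C₁ ∧ IsSplitComponent G x C₂ ∧ C₁ ≠ C₂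

open SimpleGraph.Walk in
/-- `W` is in `T₁(P)`: `W` differs from `P` by going the long way around one
detour cycle, replacing a segment `P₂` of `P` (of length `b - a ≥ 1`) by a path
`Q` of length two more, internally avoiding the replaced interior vertices. -/
def InT1 {V : Type*} {G : SimpleGraph V} {u v : V} (P W : G.Walk u v) : Prop :=
  ∃ (y z : V) (P₁ : G.Walk u y) (P₂ : G.Walk y z) (P₃ : G.Walk z v)
    (Q : G.Walk y z),
    P = P₁.append (P₂.append P₃) ∧ 1 ≤ P₂.length ∧
    Q.IsPath ∧ Q.length = P₂.length + 2 ∧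
    (∀ w ∈ Q.support, w ∈ P₂.support → w = y ∨ w = z) ∧
    W = P₁.append (Q.append P₃)

open SimpleGraph.Walk in
/-- `W` is in `T₂(P)`: `W` differs from `P` by going the long way around two
detour cycles, replacing two disjoint segments `P₂` and `P₄` of `P` (each of
length at least 1) by paths one edge longer, internally avoiding the replaced
interior vertices. -/
def InT2 {V : Type*} {G : SimpleGraph V} {u v : V} (P W : G.Walk u v) : Prop :=
  ∃ (y z y' z' : V) (P₁ : G.Walk u y) (P₂ : G.Walk y z) (P₃ : G.Walk z y')
    (P₄ : G.Walk y' z') (P₅ : G.Walk z' v) (Q : G.Walk y z) (Q' : G.Walk y' z'),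
    P = P₁.append (P₂.append (P₃.append (P₄.append P₅))) ∧
    1 ≤ P₂.length ∧ 1 ≤ P₄.length ∧
    Q.IsPath ∧ Q.length = P₂.length + 1 ∧
    (∀ w ∈ Q.support, w ∈ P₂.support → w = y ∨ w = z) ∧
    Q'.IsPath ∧ Q'.length = P₄.length + 1 ∧
    (∀ w ∈ Q'.support, w ∈ P₄.support → w = y' ∨ w = z') ∧
    W = P₁.append (Q.append (P₃.append (Q'.append P₅)))

open SimpleGraph.Walk in
/-- `W` is in `T₃(P)`: `W` follows `P` but repeats one incident edge, stepping
from some vertex of `P` to a neighbour `z` and immediately back. -/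
def InT3 {V : Type*} {G : SimpleGraph V} {u v : V} (P W : G.Walk u v) : Prop :=
  ∃ (y : V) (P₁ : G.Walk u y) (P₂ : G.Walk y v) (z : V) (h : G.Adj y z),
    P = P₁.append P₂ ∧
    W = P₁.append (SimpleGraph.Walk.cons h (SimpleGraph.Walk.cons h.symm P₂))


section CactusAux

open SimpleGraph Walk

variable {V : Type*} {G : SimpleGraph V}

/-- A walk is determined by its support. -/
theorem walk_eq_of_support_eq {u v : V} (A : G.Walk u v) :
    ∀ (B : G.Walk u v), A.support = B.support → A = B := by
  induction A with
  | nil =>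
    intro B h
    cases B with
    | nil => rfl
    | cons hB B => simp [Walk.support_cons] at h
  | cons hA A ih =>
    intro B h
    cases B with
    | nil => simp [Walk.support_cons] at h
    | cons hB B =>
      rw [Walk.support_cons, Walk.support_cons] at h
      have h' : A.support = B.support := by injection h
      have hw := h'
      rw [Walk.support_eq_cons A, Walk.support_eq_cons B] at hw
      injection hw with h1 h2
      subst h1
      rw [ih B h']

theorem walk_append_right_cancel {u z v : V} {A B : G.Walk u z} {C : G.Walk z v}
    (h : A.append C = B.append C) : A = B := by
  have hs := congrArg Walk.support h
  rw [Walk.support_append, Walk.support_append] at hs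
  exact walk_eq_of_support_eq A B (List.append_cancel_right hs)

theorem walk_append_left_cancel {u z v : V} {A : G.Walk u z} {C D : G.Walk z v}
    (h : A.append C = A.append D) : C = D := by
  have hs := congrArg Walk.support h
  rw [Walk.support_append, Walk.support_append] at hs
  have ht := List.append_cancel_left hs
  apply walk_eq_of_support_eq
  rw [Walk.support_eq_cons C, Walk.support_eq_cons D, ht]

/-- Splitting a walk with a repeated vertex. -/
theorem exists_split_of_not_nodup {u v : V} (W : G.Walk u v) (h : ¬W.support.Nodup) :
    ∃ (x : V) (A : G.Walk u x) (M : G.Walk x x) (B : G.Walk x v),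
      W = A.append (M.append B) ∧ 1 ≤ M.length := by
  classical
  obtain ⟨x, hx2⟩ : ∃ x, 2 ≤ W.support.count x := by
    by_contra hc
    push_neg at hc
    exact h (List.nodup_iff_count_le_one.mpr fun a => by have := hc a; omega)
  have hxm : x ∈ W.support := List.count_pos_iff.mp (by omega)
  set A := W.takeUntil x hxm with hA
  set D := W.dropUntil x hxm with hD
  have hspec : A.append D = W := W.take_spec hxm
  have hcount : A.support.count x = 1 := W.count_support_takeUntil_eq_one hxm
  have hsupp : W.support = A.support ++ D.support.tail := by
    rw [← hspec, Walk.support_append]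
  have hxd : x ∈ D.support.tail := by
    by_contra hxd
    rw [hsupp, List.count_append] at hx2
    have : D.support.tail.count x = 0 := List.count_eq_zero.mpr hxd
    omega
  cases hDc : D with
  | nil => rw [hDc] at hxd; simp [Walk.support_nil] at hxd
  | cons e D' =>
    rw [hDc] at hxd
    rw [Walk.support_cons] at hxd
    simp only [List.tail_cons] at hxd
    refine ⟨x, A, Walk.cons e (D'.takeUntil x hxd), D'.dropUntil x hxd, ?_, by simp⟩
    rw [← hspec, hDc]
    congr 1
    rw [Walk.cons_append, D'.take_spec hxd]

/-- Any walk between the ends of a unique shortest path is at least as long. -/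
theorem length_le_of_usp {u v : V} {P : G.Walk u v} (hP : IsUniqueShortestPath G P)
    (R : G.Walk u v) : P.length ≤ R.length := by
  classical
  by_contra hlt
  push_neg at hlt
  have h1 : R.bypass.length ≤ P.length := le_of_lt (lt_of_le_of_lt R.length_bypass_le hlt)
  have h2 := hP.2 R.bypass R.bypass_isPath h1
  have h3 := R.length_bypass_le
  have := congrArg Walk.length h2
  omega

theorem eq_of_length_le_usp {u v : V} {P : G.Walk u v} (hP : IsUniqueShortestPath G P)
    (R : G.Walk u v) (h : R.length ≤ P.length) : R = P := by
  classical
  by_cases hnd : R.support.Nodup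
  · exact hP.2 R ((Walk.isPath_def R).mpr hnd) h
  · obtain ⟨x, A, M, B, hW, hM⟩ := exists_split_of_not_nodup R hnd
    have hlb := length_le_of_usp hP (A.append B)
    have := congrArg Walk.length hW
    simp only [Walk.length_append] at this hlb
    omega

theorem usp_isPath_of_length_succ {u v : V} {P : G.Walk u v} (hP : IsUniqueShortestPath G P)
    (R : G.Walk u v) (h : R.length = P.length + 1) : R.IsPath := by
  classical
  rw [Walk.isPath_def]
  by_contra hnd
  obtain ⟨x, A, M, B, hW, hM⟩ := exists_split_of_not_nodup R hnd
  have hlb := length_le_of_usp hP (A.append B)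
  have hlen := congrArg Walk.length hW
  simp only [Walk.length_append] at hlen hlb
  have hM1 : M.length = 1 := by omega
  cases M with
  | nil => simp at hM1
  | cons e M' =>
    have : M'.length = 0 := by simpa using hM1
    obtain rfl := Walk.eq_of_length_eq_zero this
    exact e.ne rfl

/-- Excess-two dichotomy: a walk two longer than a unique shortest path is a path
or lies in `T₃`. -/
theorem isPath_or_inT3 {u v : V} {P : G.Walk u v} (hP : IsUniqueShortestPath G P)
    (W : G.Walk u v) (h : W.length = P.length + 2) : W.IsPath ∨ InT3 P W := by
  classical
  by_cases hnd : W.support.Nodup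
  · exact Or.inl ((Walk.isPath_def W).mpr hnd)
  right
  obtain ⟨x, A, M, B, hW, hM⟩ := exists_split_of_not_nodup W hnd
  have hlb := length_le_of_usp hP (A.append B)
  have hlen := congrArg Walk.length hW
  simp only [Walk.length_append] at hlen hlb
  have hM2 : M.length = 1 ∨ M.length = 2 := by omega
  rcases hM2 with hM1 | hM2
  · exfalso
    cases M with
    | nil => simp at hM1
    | cons e M' =>
      have : M'.length = 0 := by simpa using hM1
      obtain rfl := Walk.eq_of_length_eq_zero this
      exact e.ne rfl
  · cases M with
    | nil => simp at hM2
    | cons e M' =>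
      cases M' with
      | nil => simp at hM2
      | cons e₂ M'' =>
        have : M''.length = 0 := by
          simp only [Walk.length_cons] at hM2; omega
        obtain rfl := Walk.eq_of_length_eq_zero this
        cases M'' with
        | cons _ _ => simp at this
        | nil =>
          have hAB : A.append B = P := by
            apply eq_of_length_le_usp hP
            simp only [Walk.length_append]
            simp only [Walk.length_cons, Walk.length_nil] at hlen
            omega
          refine ⟨_, A, B, _, e, hAB.symm, ?_⟩
          rw [hW]
          simp [Walk.cons_append]


theorem usp_takeUntil {u v z : V} {P : G.Walk u v} (hP : IsUniqueShortestPath G P)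
    (hz : z ∈ P.support) [DecidableEq V] : IsUniqueShortestPath G (P.takeUntil z hz) := by
  refine ⟨hP.1.takeUntil hz, fun R hRp hRl => ?_⟩
  have hspec := P.take_spec hz
  have hlen := congrArg Walk.length hspec
  rw [Walk.length_append] at hlen
  have h1 : (R.append (P.dropUntil z hz)).length ≤ P.length := by
    rw [Walk.length_append]; omega
  have h2 := eq_of_length_le_usp hP _ h1
  exact walk_append_right_cancel (h2.trans hspec.symm)

theorem usp_dropUntil {u v z : V} {P : G.Walk u v} (hP : IsUniqueShortestPath G P)
    (hz : z ∈ P.support) [DecidableEq V] : IsUniqueShortestPath G (P.dropUntil z hz) := by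
  refine ⟨hP.1.dropUntil hz, fun R hRp hRl => ?_⟩
  have hspec := P.take_spec hz
  have hlen := congrArg Walk.length hspec
  rw [Walk.length_append] at hlen
  have h1 : ((P.takeUntil z hz).append R).length ≤ P.length := by
    rw [Walk.length_append]; omega
  have h2 := eq_of_length_le_usp hP _ h1
  exact walk_append_left_cancel (h2.trans hspec.symm)

theorem usp_tail {u x₁ v : V} {h' : G.Adj u x₁} {P₁ : G.Walk x₁ v}
    (hP : IsUniqueShortestPath G (Walk.cons h' P₁)) : IsUniqueShortestPath G P₁ := by
  refine ⟨hP.1.of_cons, fun R hRp hRl => ?_⟩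
  have h1 : (Walk.cons h' R).length ≤ (Walk.cons h' P₁).length := by
    simp only [Walk.length_cons]; omega
  have h2 := eq_of_length_le_usp hP _ h1
  have h3 : (Walk.cons h' Walk.nil).append R = (Walk.cons h' Walk.nil).append P₁ := by
    simpa [Walk.cons_append] using h2
  exact walk_append_left_cancel h3

/-- First vertex of a walk lying in a list `T`. -/
theorem exists_first_meet {T : List V} : ∀ {w v : V} (S : G.Walk w v), v ∈ T →
    ∃ (z : V) (Q : G.Walk w z) (R : G.Walk z v), S = Q.append R ∧ z ∈ T ∧
      ∀ c ∈ Q.support, c ∈ T → c = z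
  | _, _, Walk.nil, hv => ⟨_, Walk.nil, Walk.nil, rfl, hv, by simp⟩
  | a, v, Walk.cons e S, hv => by
    classical
    by_cases ha : a ∈ T
    · exact ⟨a, Walk.nil, Walk.cons e S, rfl, ha, by simp⟩
    · obtain ⟨z, Q, R, h1, h2, h3⟩ := exists_first_meet S hv
      refine ⟨z, Walk.cons e Q, R, by rw [Walk.cons_append, h1], h2, ?_⟩
      intro c hc hcT
      rw [Walk.support_cons] at hc
      rcases List.mem_cons.mp hc with rfl | hc
      · exact absurd hcT ha
      · exact h3 c hc hcT

theorem getVert_append_left {u v w : V} (A : G.Walk u v) (B : G.Walk v w) {i : ℕ}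
    (hi : i ≤ A.length) : (A.append B).getVert i = A.getVert i := by
  rw [Walk.getVert_append]
  rcases lt_or_eq_of_le hi with hi | rfl
  · simp [hi]
  · simp [Walk.getVert_length, Walk.getVert_zero]

theorem getVert_append_right {u v w : V} (A : G.Walk u v) (B : G.Walk v w) {i : ℕ}
    (hi : A.length ≤ i) : (A.append B).getVert i = B.getVert (i - A.length) := by
  rw [Walk.getVert_append]
  rcases lt_or_eq_of_le hi with hi | rfl
  · simp [Nat.not_lt.mpr (le_of_lt hi)]
  · simp

theorem getVert_mem_support' {u v : V} (W : G.Walk u v) {i : ℕ} (hi : i ≤ W.length) :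
    W.getVert i ∈ W.support :=
  Walk.mem_support_iff_exists_getVert.mpr ⟨i, rfl, hi⟩

theorem isPath_getVert_inj {u v : V} {W : G.Walk u v} (hW : W.IsPath) :
    ∀ i j, i ≤ W.length → j ≤ W.length → W.getVert i = W.getVert j → i = j := by
  induction W with
  | nil => intro i j hi hj _; simp only [Walk.length_nil] at hi hj; omega
  | @cons a b c e W ih =>
    intro i j hi hj hij
    have hups : a ∉ W.support := ((Walk.cons_isPath_iff e W).mp hW).2
    cases i with
    | zero =>
      cases j with
      | zero => rfl
      | succ j =>
        exfalso
        rw [Walk.getVert_zero] at hij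
        rw [Walk.length_cons] at hj
        have : W.getVert j ∈ W.support := getVert_mem_support' W (by omega)
        rw [Walk.getVert_cons_succ] at hij
        rw [← hij] at this
        exact hups this
    | succ i =>
      cases j with
      | zero =>
        exfalso
        rw [Walk.getVert_zero] at hij
        rw [Walk.length_cons] at hi
        have : W.getVert i ∈ W.support := getVert_mem_support' W (by omega)
        rw [Walk.getVert_cons_succ] at hij
        rw [hij] at this
        exact hups this
      | succ j =>
        rw [Walk.length_cons] at hi hj
        rw [Walk.getVert_cons_succ, Walk.getVert_cons_succ] at hij
        have := ih hW.of_cons i j (by omega) (by omega) hij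
        omega



theorem cons_eq_cons_mid {u a b v : V} {e₁ : G.Adj u a} {e₂ : G.Adj u b}
    {X : G.Walk a v} {Y : G.Walk b v} (h : Walk.cons e₁ X = Walk.cons e₂ Y) : a = b := by
  have hs := congrArg Walk.support h
  rw [Walk.support_cons, Walk.support_cons] at hs
  have h' : X.support = Y.support := by injection hs
  rw [Walk.support_eq_cons X, Walk.support_eq_cons Y] at h'
  injection h' with h1 _

/-- If a walk starts with an edge different from that of a unique shortest path,
its second vertex is off the path. -/
theorem snd_not_mem_support {u x₁ w v : V} {h' : G.Adj u x₁} {P₁ : G.Walk x₁ v}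
    (hP : IsUniqueShortestPath G (Walk.cons h' P₁)) (h : G.Adj u w) (hw : w ≠ x₁) :
    w ∉ (Walk.cons h' P₁).support := by
  classical
  intro hws
  have hspec := (Walk.cons h' P₁).take_spec hws
  have hlen := congrArg Walk.length hspec
  rw [Walk.length_append, Walk.length_cons] at hlen
  have hlb := length_le_of_usp hP (Walk.cons h ((Walk.cons h' P₁).dropUntil w hws))
  rw [Walk.length_cons, Walk.length_cons] at hlb
  have ht' : ((Walk.cons h' P₁).takeUntil w hws).length = 0 ∨
      ((Walk.cons h' P₁).takeUntil w hws).length = 1 := by omega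
  rcases ht' with ht' | ht'
  · obtain rfl := Walk.eq_of_length_eq_zero ht'
    exact h.ne rfl
  · cases htk : (Walk.cons h' P₁).takeUntil w hws with
    | nil => rw [htk] at ht'; simp at ht'
    | @cons _ c _ e X =>
      rw [htk] at ht'
      rw [Walk.length_cons] at ht'
      obtain rfl := Walk.eq_of_length_eq_zero (by omega : X.length = 0)
      rw [htk, Walk.cons_append] at hspec
      exact hw (cons_eq_cons_mid hspec)

/-- Excess-one decomposition: a walk one longer than a unique shortest path
deviates from it along exactly one detour, one edge longer. -/
theorem excess_one_decomp : ∀ {u v : V} (P : G.Walk u v), IsUniqueShortestPath G P →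
    ∀ (W : G.Walk u v), W.length = P.length + 1 →
    ∃ (y' z' : V) (A : G.Walk u y') (P₄ : G.Walk y' z') (B : G.Walk z' v) (Q' : G.Walk y' z'),
      P = A.append (P₄.append B) ∧ 1 ≤ P₄.length ∧ Q'.IsPath ∧ Q'.length = P₄.length + 1 ∧
      (∀ w ∈ Q'.support, w ∈ P₄.support → w = y' ∨ w = z') ∧
      W = A.append (Q'.append B)
  | u, _, Walk.nil, hP, W, hW => by
    exfalso
    cases W with
    | nil => simp at hW
    | @cons _ w _ h W₁ =>
      rw [Walk.length_cons, Walk.length_nil] at hW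
      obtain rfl := Walk.eq_of_length_eq_zero (by omega : W₁.length = 0)
      exact h.ne rfl
  | u, v, @Walk.cons _ _ _ x₁ _ h' P₁, hP, W, hW => by
    classical
    cases W with
    | nil => simp at hW
    | @cons _ w _ h W₁ =>
      rw [Walk.length_cons, Walk.length_cons] at hW
      by_cases hw : w = x₁
      · subst hw
        obtain ⟨y', z', A, P₄, B, Q', d1, d2, d3, d4, d5, d6⟩ :=
          excess_one_decomp P₁ (usp_tail hP) W₁ (by omega)
        refine ⟨y', z', Walk.cons h' A, P₄, B, Q', ?_, d2, d3, d4, d5, ?_⟩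
        · rw [Walk.cons_append, ← d1]
        · rw [Walk.cons_append, ← d6]
      · -- the walk deviates from the start
        set P : G.Walk u v := Walk.cons h' P₁ with hPdef
        have hPlen : P.length = P₁.length + 1 := by
          rw [hPdef]; exact Walk.length_cons h' P₁
        have hWpath : (Walk.cons h W₁).IsPath :=
          usp_isPath_of_length_succ hP _ (by rw [Walk.length_cons]; omega)
        obtain ⟨z, Q₁, R, hW₁, hzP, hmeet⟩ :=
          exists_first_meet W₁ (T := P.support) P.end_mem_support
        have hWQ : Walk.cons h W₁ = (Walk.cons h Q₁).append R := by
          rw [Walk.cons_append, hW₁]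
        have hQpath : (Walk.cons h Q₁).IsPath := by
          rw [hWQ] at hWpath; exact hWpath.of_append_left
        have hzu : z ≠ u := by
          rintro rfl
          rw [Walk.isPath_iff_eq_nil] at hQpath
          simp at hQpath
        have hspec := P.take_spec hzP
        have hlent := congrArg Walk.length hspec
        rw [Walk.length_append] at hlent
        have ht1 : 1 ≤ (P.takeUntil z hzP).length := by
          rcases Nat.eq_zero_or_pos (P.takeUntil z hzP).length with h0 | h0
          · exact absurd (Walk.eq_of_length_eq_zero h0).symm hzu
          · omega
        have hQlb := length_le_of_usp (usp_takeUntil hP hzP) (Walk.cons h Q₁)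
        rw [Walk.length_cons] at hQlb
        have hRlb := length_le_of_usp (usp_dropUntil hP hzP) R
        have hWlen := congrArg Walk.length hWQ
        rw [Walk.length_cons, Walk.length_append, Walk.length_cons] at hWlen
        have hQcases : (Walk.cons h Q₁).length = (P.takeUntil z hzP).length ∨
            (Walk.cons h Q₁).length = (P.takeUntil z hzP).length + 1 := by
          rw [Walk.length_cons]; omega
        rcases hQcases with hQc | hQc
        · exfalso
          have hQeq := eq_of_length_le_usp (usp_takeUntil hP hzP) (Walk.cons h Q₁) (le_of_eq hQc)
          rw [← hQeq, Walk.cons_append] at hspec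
          exact hw (cons_eq_cons_mid hspec)
        · rw [Walk.length_cons] at hQc
          have hReq : R = P.dropUntil z hzP := by
            apply eq_of_length_le_usp (usp_dropUntil hP hzP) R
            omega
          refine ⟨u, z, Walk.nil, P.takeUntil z hzP, P.dropUntil z hzP, Walk.cons h Q₁,
            by rw [Walk.nil_append, hspec], ht1, hQpath, by rw [Walk.length_cons]; omega, ?_, ?_⟩
          · intro c hc hcP₄
            rw [Walk.support_cons] at hc
            rcases List.mem_cons.mp hc with rfl | hc
            · exact Or.inl rfl
            · exact Or.inr (hmeet c hc (Walk.support_takeUntil_subset P hzP hcP₄))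
          · rw [Walk.nil_append, ← hReq]
            exact hWQ



/-- Excess-two decomposition: a path two longer than a unique shortest path is in
`T₁` or `T₂`. -/
theorem excess_two_decomp : ∀ {u v : V} (P : G.Walk u v), IsUniqueShortestPath G P →
    ∀ (W : G.Walk u v), W.length = P.length + 2 → W.IsPath → InT1 P W ∨ InT2 P W
  | u, _, Walk.nil, hP, W, hW, hWp => by
    exfalso
    rw [Walk.isPath_iff_eq_nil] at hWp
    rw [hWp] at hW
    simp at hW
  | u, v, @Walk.cons _ _ _ x₁ _ h' P₁, hP, W, hW, hWp => by
    classical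
    cases W with
    | nil =>
      exfalso
      rw [Walk.length_nil, Walk.length_cons] at hW
      omega
    | @cons _ w _ h W₁ =>
      rw [Walk.length_cons, Walk.length_cons] at hW
      by_cases hw : w = x₁
      · subst hw
        rcases excess_two_decomp P₁ (usp_tail hP) W₁ (by omega) hWp.of_cons with hT | hT
        · obtain ⟨y, z, A1, A2, A3, Q, e1, e2, e3, e4, e5, e6⟩ := hT
          exact Or.inl ⟨y, z, Walk.cons h' A1, A2, A3, Q,
            by rw [Walk.cons_append, ← e1], e2, e3, e4, e5,
            by rw [Walk.cons_append, ← e6]⟩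
        · obtain ⟨y, z, y', z', B1, B2, B3, B4, B5, Q, Q',
            e1, e2, e3, e4, e5, e6, e7, e8, e9, e10⟩ := hT
          exact Or.inr ⟨y, z, y', z', Walk.cons h' B1, B2, B3, B4, B5, Q, Q',
            by rw [Walk.cons_append, ← e1], e2, e3, e4, e5, e6, e7, e8, e9,
            by rw [Walk.cons_append, ← e10]⟩
      · set P : G.Walk u v := Walk.cons h' P₁ with hPdef
        have hPlen : P.length = P₁.length + 1 := by
          rw [hPdef]; exact Walk.length_cons h' P₁
        obtain ⟨z, Q₁, R, hW₁, hzP, hmeet⟩ :=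
          exists_first_meet W₁ (T := P.support) P.end_mem_support
        have hWQ : Walk.cons h W₁ = (Walk.cons h Q₁).append R := by
          rw [Walk.cons_append, hW₁]
        have hQpath : (Walk.cons h Q₁).IsPath := by
          rw [hWQ] at hWp; exact hWp.of_append_left
        have hzu : z ≠ u := by
          rintro rfl
          rw [Walk.isPath_iff_eq_nil] at hQpath
          simp at hQpath
        have hspec := P.take_spec hzP
        have hlent := congrArg Walk.length hspec
        rw [Walk.length_append] at hlent
        have ht1 : 1 ≤ (P.takeUntil z hzP).length := by
          rcases Nat.eq_zero_or_pos (P.takeUntil z hzP).length with h0 | h0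
          · exact absurd (Walk.eq_of_length_eq_zero h0).symm hzu
          · omega
        have hQlb := length_le_of_usp (usp_takeUntil hP hzP) (Walk.cons h Q₁)
        rw [Walk.length_cons] at hQlb
        have hRlb := length_le_of_usp (usp_dropUntil hP hzP) R
        have hWlen := congrArg Walk.length hWQ
        rw [Walk.length_cons, Walk.length_append, Walk.length_cons] at hWlen
        have hQcases : (Walk.cons h Q₁).length = (P.takeUntil z hzP).length ∨
            (Walk.cons h Q₁).length = (P.takeUntil z hzP).length + 1 ∨
            (Walk.cons h Q₁).length = (P.takeUntil z hzP).length + 2 := by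
          rw [Walk.length_cons]; omega
        have havoid : ∀ c ∈ (Walk.cons h Q₁).support, c ∈ (P.takeUntil z hzP).support →
            c = u ∨ c = z := by
          intro c hc hcP₄
          rw [Walk.support_cons] at hc
          rcases List.mem_cons.mp hc with rfl | hc
          · exact Or.inl rfl
          · exact Or.inr (hmeet c hc (Walk.support_takeUntil_subset P hzP hcP₄))
        rcases hQcases with hQc | hQc | hQc
        · exfalso
          have hQeq := eq_of_length_le_usp (usp_takeUntil hP hzP) (Walk.cons h Q₁) (le_of_eq hQc)
          rw [← hQeq, Walk.cons_append] at hspec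
          exact hw (cons_eq_cons_mid hspec)
        · -- two single detours: T2
          rw [Walk.length_cons] at hQc
          have hRlen : R.length = (P.dropUntil z hzP).length + 1 := by omega
          obtain ⟨y', z', A, P₄, B, Q', d1, d2, d3, d4, d5, d6⟩ :=
            excess_one_decomp (P.dropUntil z hzP) (usp_dropUntil hP hzP) R hRlen
          right
          refine ⟨u, z, y', z', Walk.nil, P.takeUntil z hzP, A, P₄, B, Walk.cons h Q₁, Q',
            ?_, ht1, d2, hQpath, by rw [Walk.length_cons]; omega, havoid, d3, d4, d5, ?_⟩
          · rw [Walk.nil_append]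
            have h2 := hspec.symm
            rw [d1] at h2
            exact h2
          · rw [Walk.nil_append]
            rw [d6] at hWQ
            exact hWQ
        · -- one double detour: T1
          rw [Walk.length_cons] at hQc
          have hReq : R = P.dropUntil z hzP := by
            apply eq_of_length_le_usp (usp_dropUntil hP hzP) R
            omega
          left
          refine ⟨u, z, Walk.nil, P.takeUntil z hzP, P.dropUntil z hzP, Walk.cons h Q₁,
            by rw [Walk.nil_append, hspec], ht1, hQpath, by rw [Walk.length_cons]; omega,
            havoid, ?_⟩
          rw [Walk.nil_append, ← hReq]
          exact hWQ



theorem getVert_append3_left {u a b v : V} (A : G.Walk u a) (M : G.Walk a b) (B : G.Walk b v)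
    {k : ℕ} (hk : k ≤ A.length) : (A.append (M.append B)).getVert k = A.getVert k :=
  getVert_append_left _ _ hk

theorem getVert_append3_mid {u a b v : V} (A : G.Walk u a) (M : G.Walk a b) (B : G.Walk b v)
    {j : ℕ} (hj : j ≤ M.length) :
    (A.append (M.append B)).getVert (A.length + j) = M.getVert j := by
  rw [getVert_append_right _ _ (by omega)]
  have h1 : A.length + j - A.length = j := by omega
  rw [h1, getVert_append_left _ _ hj]

theorem getVert_append3_right {u a b v : V} (A : G.Walk u a) (M : G.Walk a b) (B : G.Walk b v)
    {k : ℕ} (hk : A.length + M.length ≤ k) :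
    (A.append (M.append B)).getVert k = B.getVert (k - A.length - M.length) := by
  rw [getVert_append_right _ _ (by omega), getVert_append_right _ _ (by omega)]

theorem length_of_inT1 {u v : V} {P W : G.Walk u v} (h : InT1 P W) :
    W.length = P.length + 2 := by
  obtain ⟨y, z, P₁, P₂, P₃, Q, hPeq, hm, hQp, hQl, hQav, hWeq⟩ := h
  rw [hPeq, hWeq]
  simp only [Walk.length_append]
  omega

theorem length_of_inT2 {u v : V} {P W : G.Walk u v} (h : InT2 P W) :
    W.length = P.length + 2 := by
  obtain ⟨y, z, y', z', P₁, P₂, P₃, P₄, P₅, Q, Q',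
    hPeq, hm2, hm4, hQp, hQl, hQav, hQ'p, hQ'l, hQ'av, hWeq⟩ := h
  rw [hPeq, hWeq]
  simp only [Walk.length_append]
  omega

theorem length_of_inT3 {u v : V} {P W : G.Walk u v} (h : InT3 P W) :
    W.length = P.length + 2 := by
  obtain ⟨y, P₁, P₂, z, e, hPeq, hWeq⟩ := h
  rw [hPeq, hWeq]
  simp only [Walk.length_append, Walk.length_cons]
  omega

theorem not_isPath_of_inT3 {u v : V} {P W : G.Walk u v} (h : InT3 P W) : ¬W.IsPath := by
  obtain ⟨y, P₁, P₂, z, e, hPeq, hWeq⟩ := h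
  intro hWp
  rw [Walk.isPath_def, hWeq, Walk.support_append] at hWp
  have hdisj := List.disjoint_of_nodup_append hWp
  exact hdisj P₁.end_mem_support (by
    rw [Walk.support_cons, Walk.support_cons]
    simp only [List.tail_cons]
    exact List.mem_cons_of_mem _ P₂.start_mem_support)

/-- getVert description of a `T₃` bounce. -/
theorem inT3_getVert {u v : V} {P W : G.Walk u v} (h : InT3 P W) :
    ∃ a, a ≤ P.length ∧ (∀ k, k ≤ a → W.getVert k = P.getVert k) ∧
      (∀ k, a + 2 ≤ k → W.getVert k = P.getVert (k - 2)) := by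
  obtain ⟨y, P₁, P₂, z, e, hPeq, hWeq⟩ := h
  refine ⟨P₁.length, ?_, ?_, ?_⟩
  · rw [hPeq, Walk.length_append]; omega
  · intro k hk
    rw [hWeq, hPeq, getVert_append_left _ _ hk, getVert_append_left _ _ hk]
  · intro k hk
    rw [hWeq, hPeq, getVert_append_right _ _ (by omega),
      getVert_append_right _ _ (by omega : P₁.length ≤ k - 2)]
    have h2 : k - P₁.length = (k - P₁.length - 2) + 2 := by omega
    rw [h2, Walk.getVert_cons_succ, Walk.getVert_cons_succ]
    congr 1
    omega



theorem isPath_of_inT1 {u v : V} {P W : G.Walk u v} (hP : IsUniqueShortestPath G P)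
    (hT : InT1 P W) : W.IsPath := by
  obtain ⟨y, z, P₁, P₂, P₃, Q, hPeq, hm, hQp, hQl, hQav, hWeq⟩ := hT
  have hWlen : W.length = P.length + 2 :=
    length_of_inT1 ⟨y, z, P₁, P₂, P₃, Q, hPeq, hm, hQp, hQl, hQav, hWeq⟩
  rcases isPath_or_inT3 hP W hWlen with hpath | h3
  · exact hpath
  exfalso
  obtain ⟨a, ha, hbl, hbr⟩ := inT3_getVert h3
  set p := P₁.length with hp
  set m := P₂.length with hmm
  have hPinj := isPath_getVert_inj hP.1
  have hQinj := isPath_getVert_inj hQp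
  have hPlen : P.length = p + (m + P₃.length) := by
    rw [hPeq]; simp only [Walk.length_append]; rfl
  have hWmid : ∀ j, j ≤ m + 2 → W.getVert (p + j) = Q.getVert j := by
    intro j hj
    rw [hWeq]; exact getVert_append3_mid _ _ _ (by omega)
  have hPmid : ∀ j, j ≤ m → P.getVert (p + j) = P₂.getVert j := by
    intro j hj
    rw [hPeq]; exact getVert_append3_mid _ _ _ (by omega)
  have hy : Q.getVert 0 = P.getVert p := by
    rw [Walk.getVert_zero, (by omega : p = p + 0), hPmid 0 (by omega), Walk.getVert_zero]
  have hz : Q.getVert (m + 2) = P.getVert (p + m) := by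
    rw [hPmid m le_rfl, (by rw [hQl] : m + 2 = Q.length), Walk.getVert_length,
      (by rw [hmm] : m = P₂.length), Walk.getVert_length]
  by_cases c1 : a + 2 ≤ p
  · have e1 := hbr p (by omega)
    have e2 := hWmid 0 (by omega)
    rw [Nat.add_zero] at e2
    rw [e2, hy] at e1
    have := hPinj p (p - 2) (by omega) (by omega) e1
    omega
  by_cases c2 : a + 1 = p
  · have e1 := hbr (p + 2) (by omega)
    have e2 := hWmid 2 (by omega)
    rw [e2, (by omega : p + 2 - 2 = p), ← hy] at e1
    have := hQinj 2 0 (by omega) (by omega) e1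
    omega
  by_cases c3 : p ≤ a ∧ a ≤ p + m
  · obtain ⟨c3a, c3b⟩ := c3
    have e1 := hWmid (a - p) (by omega)
    rw [(by omega : p + (a - p) = a)] at e1
    have e2 := hWmid (a - p + 2) (by omega)
    rw [(by omega : p + (a - p + 2) = a + 2)] at e2
    have e3 := hbl a le_rfl
    have e4 := hbr (a + 2) le_rfl
    rw [(by omega : a + 2 - 2 = a)] at e4
    have e5 : Q.getVert (a - p) = Q.getVert (a - p + 2) := by
      rw [← e1, ← e2, e3, e4]
    have := hQinj (a - p) (a - p + 2) (by omega) (by omega) e5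
    omega
  by_cases c4 : a = p + m + 1
  · have e1 := hbl (p + m) (by omega)
    have e2 := hWmid m (by omega)
    rw [(by omega : p + m = p + m)] at e2
    rw [e2] at e1
    have e3 : Q.getVert m = Q.getVert (m + 2) := by rw [hz, e1]
    have := hQinj m (m + 2) (by omega) (by omega) e3
    omega
  · have c5 : p + m + 2 ≤ a := by omega
    have e1 := hbl (p + m + 2) (by omega)
    have e2 := hWmid (m + 2) le_rfl
    rw [(by omega : p + (m + 2) = p + m + 2)] at e2
    rw [e2, hz] at e1
    have := hPinj (p + m) (p + m + 2) (by omega) (by omega) e1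
    omega

theorem isPath_of_inT2 {u v : V} {P W : G.Walk u v} (hP : IsUniqueShortestPath G P)
    (hT : InT2 P W) : W.IsPath := by
  obtain ⟨y, z, y', z', P₁, P₂, P₃, P₄, P₅, Q, Q',
    hPeq, hm2, hm4, hQp, hQl, hQav, hQ'p, hQ'l, hQ'av, hWeq⟩ := hT
  have hWlen : W.length = P.length + 2 :=
    length_of_inT2 ⟨y, z, y', z', P₁, P₂, P₃, P₄, P₅, Q, Q',
      hPeq, hm2, hm4, hQp, hQl, hQav, hQ'p, hQ'l, hQ'av, hWeq⟩
  rcases isPath_or_inT3 hP W hWlen with hpath | h3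
  · exact hpath
  exfalso
  obtain ⟨a, ha, hbl, hbr⟩ := inT3_getVert h3
  set p := P₁.length with hp
  set m := P₂.length with hmm
  have hPinj := isPath_getVert_inj hP.1
  have hQinj := isPath_getVert_inj hQp
  have hPlen : P.length = p + (m + (P₃.length + (P₄.length + P₅.length))) := by
    rw [hPeq]; simp only [Walk.length_append]; rfl
  have hWmid : ∀ j, j ≤ m + 1 → W.getVert (p + j) = Q.getVert j := by
    intro j hj
    rw [hWeq]; exact getVert_append3_mid _ _ _ (by omega)
  have hPmid : ∀ j, j ≤ m → P.getVert (p + j) = P₂.getVert j := by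
    intro j hj
    rw [hPeq]; exact getVert_append3_mid _ _ _ (by omega)
  have hy : Q.getVert 0 = P.getVert p := by
    rw [Walk.getVert_zero, (by omega : p = p + 0), hPmid 0 (by omega), Walk.getVert_zero]
  have hz : Q.getVert (m + 1) = P.getVert (p + m) := by
    rw [hPmid m le_rfl, (by rw [hQl] : m + 1 = Q.length), Walk.getVert_length,
      (by rw [hmm] : m = P₂.length), Walk.getVert_length]
  by_cases c1 : a + 2 ≤ p
  · have e1 := hbr p (by omega)
    have e2 := hWmid 0 (by omega)
    rw [Nat.add_zero] at e2
    rw [e2, hy] at e1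
    have := hPinj p (p - 2) (by omega) (by omega) e1
    omega
  by_cases c2 : a + 1 = p
  · have e1 := hbr (p + 2) (by omega)
    have e2 := hWmid 2 (by omega)
    rw [e2, (by omega : p + 2 - 2 = p), ← hy] at e1
    have := hQinj 2 0 (by omega) (by omega) e1
    omega
  by_cases c3 : p ≤ a ∧ a + 1 ≤ p + m
  · obtain ⟨c3a, c3b⟩ := c3
    have e1 := hWmid (a - p) (by omega)
    rw [(by omega : p + (a - p) = a)] at e1
    have e2 := hWmid (a - p + 2) (by omega)
    rw [(by omega : p + (a - p + 2) = a + 2)] at e2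
    have e3 := hbl a le_rfl
    have e4 := hbr (a + 2) le_rfl
    rw [(by omega : a + 2 - 2 = a)] at e4
    have e5 : Q.getVert (a - p) = Q.getVert (a - p + 2) := by
      rw [← e1, ← e2, e3, e4]
    have := hQinj (a - p) (a - p + 2) (by omega) (by omega) e5
    omega
  by_cases c4 : a = p + m
  · have e1 := hbl (p + m) (by omega)
    have e2 := hWmid m (by omega)
    rw [e2] at e1
    have e3 : Q.getVert m = Q.getVert (m + 1) := by rw [hz, e1]
    have := hQinj m (m + 1) (by omega) (by omega) e3
    omega
  · have c5 : p + m + 1 ≤ a := by omega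
    have e1 := hbl (p + m + 1) (by omega)
    have e2 := hWmid (m + 1) le_rfl
    rw [(by omega : p + (m + 1) = p + m + 1)] at e2
    rw [e2, hz] at e1
    have := hPinj (p + m) (p + m + 1) (by omega) (by omega) e1
    omega



theorem not_inT1_and_inT2 {u v : V} {P W : G.Walk u v} (hP : IsUniqueShortestPath G P)
    (h1 : InT1 P W) (h2 : InT2 P W) : False := by
  have hWp := isPath_of_inT1 hP h1
  have hWinj := isPath_getVert_inj hWp
  have hPinj := isPath_getVert_inj hP.1
  have hWlen := length_of_inT1 h1
  obtain ⟨ya, za, A1, A2, A3, Qa, f1, f2, f3, f4, f5, f6⟩ := h1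
  obtain ⟨y, z, y', z', B1, B2, B3, B4, B5, Q, Q',
    g1, g2, g3, g4, g5, g6, g7, g8, g9, g10⟩ := h2
  have hPlenA : P.length = A1.length + (A2.length + A3.length) := by
    rw [f1]; simp only [Walk.length_append]
  have hPlenB : P.length =
      B1.length + (B2.length + (B3.length + (B4.length + B5.length))) := by
    rw [g1]; simp only [Walk.length_append]
  have hWleftA : ∀ k, k ≤ A1.length → W.getVert k = P.getVert k := by
    intro k hk
    rw [f6, f1, getVert_append3_left A1 Qa A3 hk, getVert_append3_left A1 A2 A3 hk]
  have hWrightA : ∀ k, A1.length + A2.length + 2 ≤ k → W.getVert k = P.getVert (k - 2) := by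
    intro k hk
    rw [f6, f1, getVert_append3_right A1 Qa A3 (by omega),
      getVert_append3_right A1 A2 A3 (by omega : A1.length + A2.length ≤ k - 2)]
    congr 1
    omega
  have hWmidA : ∀ j, j ≤ A2.length + 2 → W.getVert (A1.length + j) = Qa.getVert j := by
    intro j hj
    rw [f6]; exact getVert_append3_mid _ _ _ (by omega)
  have hPmidA : ∀ j, j ≤ A2.length → P.getVert (A1.length + j) = A2.getVert j := by
    intro j hj
    rw [f1]; exact getVert_append3_mid _ _ _ (by omega)
  have hya : P.getVert A1.length = ya := by
    have := hPmidA 0 (by omega)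
    rwa [Nat.add_zero, Walk.getVert_zero] at this
  have hza : P.getVert (A1.length + A2.length) = za := by
    have := hPmidA A2.length le_rfl
    rwa [Walk.getVert_length] at this
  -- interior of the T1 detour avoids P
  have hint : ∀ k, A1.length < k → k < A1.length + A2.length + 2 →
      ∀ k', k' ≤ P.length → P.getVert k' ≠ W.getVert k := by
    intro k hk1 hk2 k' hk' heq
    by_cases d1 : k' ≤ A1.length
    · have hw := hWleftA k' d1
      have := hWinj k' k (by omega) (by omega) (by rw [hw, heq])
      omega
    by_cases d2 : k' < A1.length + A2.length
    · have hc1 : W.getVert k = Qa.getVert (k - A1.length) := by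
        have := hWmidA (k - A1.length) (by omega)
        rwa [(by omega : A1.length + (k - A1.length) = k)] at this
      have hcQ : W.getVert k ∈ Qa.support := by
        rw [hc1]; exact getVert_mem_support' Qa (by omega)
      have hc2 : P.getVert k' = A2.getVert (k' - A1.length) := by
        have := hPmidA (k' - A1.length) (by omega)
        rwa [(by omega : A1.length + (k' - A1.length) = k')] at this
      have hcP : W.getVert k ∈ A2.support := by
        rw [← heq, hc2]; exact getVert_mem_support' A2 (by omega)
      rcases f5 _ hcQ hcP with hc | hc
      · have := hPinj k' A1.length (by omega) (by omega)
          ((heq.trans hc).trans hya.symm)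
        omega
      · have := hPinj k' (A1.length + A2.length) (by omega) (by omega)
          ((heq.trans hc).trans hza.symm)
        omega
    · have hw := hWrightA (k' + 2) (by omega)
      rw [(by omega : k' + 2 - 2 = k')] at hw
      have := hWinj (k' + 2) k (by omega) (by omega) (by rw [hw, heq])
      omega
  -- the T2 first rejoin vertex
  have hWmidB : W.getVert (B1.length + (B2.length + 1)) = Q.getVert (B2.length + 1) := by
    rw [g10]; exact getVert_append3_mid _ _ _ (by omega)
  have hPmidB : P.getVert (B1.length + B2.length) = B2.getVert B2.length := by
    rw [g1]; exact getVert_append3_mid _ _ _ le_rfl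
  have hkey : W.getVert (B1.length + B2.length + 1) = P.getVert (B1.length + B2.length) := by
    rw [(by omega : B1.length + B2.length + 1 = B1.length + (B2.length + 1)), hWmidB, hPmidB,
      (by rw [g5] : B2.length + 1 = Q.length), Walk.getVert_length, Walk.getVert_length]
  by_cases e1 : B1.length + B2.length + 1 ≤ A1.length
  · have hw := hWleftA _ e1
    have := hPinj (B1.length + B2.length + 1) (B1.length + B2.length)
      (by omega) (by omega) (by rw [← hw, hkey])
    omega
  by_cases e2 : B1.length + B2.length + 1 < A1.length + A2.length + 2
  · exact hint (B1.length + B2.length + 1) (by omega) (by omega)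
      (B1.length + B2.length) (by omega) hkey.symm
  · have hw := hWrightA (B1.length + B2.length + 1) (by omega)
    rw [(by omega : B1.length + B2.length + 1 - 2 = B1.length + B2.length - 1)] at hw
    have := hPinj (B1.length + B2.length - 1) (B1.length + B2.length)
      (by omega) (by omega) (by rw [← hw, hkey])
    omega


end CactusAux

/-- If `P` is the unique shortest path between its endpoints in a cactus graph,
then `T₁(P)`, `T₂(P)`, `T₃(P)` are pairwise disjoint and their union is the set
of all walks of length `ℓ(P) + 2` between the endpoints of `P`. -/
theorem cactus_walk_partition {V : Type*} [Fintype V]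
    (G : SimpleGraph V) (hcactus : IsCactus G)
    {u v : V} (P : G.Walk u v) (hP : IsUniqueShortestPath G P) :
    (∀ W : G.Walk u v, W.length = P.length + 2 ↔ (InT1 P W ∨ InT2 P W ∨ InT3 P W)) ∧
    (∀ W : G.Walk u v, ¬(InT1 P W ∧ InT2 P W)) ∧
    (∀ W : G.Walk u v, ¬(InT1 P W ∧ InT3 P W)) ∧
    (∀ W : G.Walk u v, ¬(InT2 P W ∧ InT3 P W)) := by
  refine ⟨fun W => ⟨fun hlen => ?_, fun h => ?_⟩,
    fun W h => not_inT1_and_inT2 hP h.1 h.2,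
    fun W h => not_isPath_of_inT3 h.2 (isPath_of_inT1 hP h.1),
    fun W h => not_isPath_of_inT3 h.2 (isPath_of_inT2 hP h.1)⟩
  · rcases isPath_or_inT3 hP W hlen with hp | h3
    · rcases excess_two_decomp P hP W hlen hp with h | h
      · exact Or.inl h
      · exact Or.inr (Or.inl h)
    · exact Or.inr (Or.inr h3)
  · rcases h with h | h | h
    exacts [length_of_inT1 h, length_of_inT2 h, length_of_inT3 h]
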